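/- Let C be a nonempty closed convex subset of ℝⁿ, f : ℝⁿ × ℝⁿ → ℝ with f(x,x) = 0 for all x ∈ C, let x ∈ C and ρ > 0. Assume the function y ↦ f(x,y) is differentiable on an open set containing C and pseudoconvex on C, and that x itself minimizes y ↦ f(x,y) + (1/(2ρ))‖y − x‖² over C. Then x is a solution of the equilibrium problem, i.e., f(x,y) ≥ 0 for all y ∈ C. -/

import Mathlib

open Filter Topology RealInnerProductSpace

theorem prox_fixed_point_is_solution_of_pseudoconvex {n : ℕ}
    (C : Set (EuclideanSpace ℝ (Fin n)))
    (hCne : C.Nonempty) (hCcl : IsClosed C) (hCcv : Convex ℝ C)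
    (f : EuclideanSpace ℝ (Fin n) → EuclideanSpace ℝ (Fin n) → ℝ)
    (hdiag : ∀ u ∈ C, f u u = 0)
    (x : EuclideanSpace ℝ (Fin n)) (hx : x ∈ C)
    (ρ : ℝ) (hρ : 0 < ρ)
    -- f(x,·) is differentiable on an open set containing C
    (hdiff : ∃ U : Set (EuclideanSpace ℝ (Fin n)), IsOpen U ∧ C ⊆ U ∧
      ∀ u ∈ U, DifferentiableAt ℝ (f x) u)
    -- f(x,·) is pseudoconvex on C
    (hpseudo : ∀ u ∈ C, ∀ v ∈ C,
      0 ≤ ⟪gradient (f x) u, v - u⟫ → f x u ≤ f x v)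
    -- x minimizes y ↦ f(x,y) + (1/(2ρ))‖y − x‖² over C
    (hmin : ∀ u ∈ C,
      f x x + (1 / (2 * ρ)) * ‖x - x‖ ^ 2 ≤ f x u + (1 / (2 * ρ)) * ‖u - x‖ ^ 2) :
    ∀ y ∈ C, 0 ≤ f x y := by
  intro y hy
  obtain ⟨U, hUopen, hCU, hUdiff⟩ := hdiff
  have hdx : DifferentiableAt ℝ (f x) x := hUdiff x (hCU hx)
  have hfxx : f x x = 0 := hdiag x hx
  -- the gradient gives the Fréchet derivative
  have hG : HasFDerivAt (f x) (InnerProductSpace.toDual ℝ _ (gradient (f x) x)) x :=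
    hdx.hasGradientAt.hasFDerivAt
  set c : ℝ := (1 / (2 * ρ)) * ‖y - x‖ ^ 2 with hc
  have hc0 : 0 ≤ c := by positivity
  -- the curve t ↦ x + t • (y - x)
  set γ : ℝ → EuclideanSpace ℝ (Fin n) := fun t => x + t • (y - x) with hγ
  have hγd : HasDerivAt γ (y - x) 0 := by
    have : HasDerivAt (fun t : ℝ => t • (y - x)) ((1 : ℝ) • (y - x)) 0 :=
      (hasDerivAt_id 0).smul_const (y - x)
    have h2 := this.const_add x
    simp only [one_smul] at h2
    exact h2
  have hγ0 : γ 0 = x := by simp [hγ]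
  -- derivative of g = f x ∘ γ at 0
  have hgd : HasDerivAt (fun t => f x (γ t)) (⟪gradient (f x) x, y - x⟫) 0 := by
    have hG' : HasFDerivAt (f x) (InnerProductSpace.toDual ℝ _ (gradient (f x) x)) (γ 0) := by
      rw [hγ0]; exact hG
    have := hG'.comp_hasDerivAt 0 hγd
    rw [InnerProductSpace.toDual_apply_apply] at this
    exact this
  -- membership of curve points in C for t ∈ [0,1]
  have hmem : ∀ t : ℝ, 0 ≤ t → t ≤ 1 → γ t ∈ C := by
    intro t ht0 ht1
    have := hCcv hx hy (by linarith : (0:ℝ) ≤ 1 - t) ht0 (by ring)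
    convert this using 1
    simp [hγ]
    module
  -- lower bound on f x (γ t)
  have hlow : ∀ t : ℝ, 0 ≤ t → t ≤ 1 → -(t ^ 2 * c) ≤ f x (γ t) := by
    intro t ht0 ht1
    have h := hmin (γ t) (hmem t ht0 ht1)
    have hnorm : ‖γ t - x‖ = t * ‖y - x‖ := by
      simp [hγ, norm_smul, abs_of_nonneg ht0]
    rw [hfxx, hnorm] at h
    simp only [sub_self, norm_zero] at h
    nlinarith [h]
  -- the slope is eventually ≥ -t * c on (0, ∞)
  have hslope : Tendsto (slope (fun t => f x (γ t)) 0) (𝓝[>] 0)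
      (𝓝 (⟪gradient (f x) x, y - x⟫)) :=
    (hasDerivAt_iff_tendsto_slope.mp hgd).mono_left
      (nhdsWithin_mono 0 fun t ht => ne_of_gt ht)
  have hkey : 0 ≤ ⟪gradient (f x) x, y - x⟫ := by
    have htend0 : Tendsto (fun t : ℝ => -(t * c)) (𝓝[>] 0) (𝓝 0) := by
      have : Tendsto (fun t : ℝ => -(t * c)) (𝓝 0) (𝓝 (-(0 * c))) :=
        ((continuous_id.mul continuous_const).neg).tendsto 0
      simpa using this.mono_left nhdsWithin_le_nhds
    refine le_of_tendsto_of_tendsto htend0 hslope ?_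
    filter_upwards [Ioo_mem_nhdsGT_of_mem (by simp : (0:ℝ) ∈ Set.Ico 0 1)] with t ht
    obtain ⟨ht0, ht1⟩ := ht
    have hl := hlow t ht0.le ht1.le
    rw [slope_def_field]
    have hg0 : f x (γ 0) = 0 := by rw [hγ0, hfxx]
    rw [hg0, sub_zero, sub_zero, le_div_iff₀ ht0]
    nlinarith
  have := hpseudo x hx y hy hkey
  rw [hfxx] at this
  exact this
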